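/- For every pair k ≠ l in {1,…,P}, indices i ∈ {1,…,N_k}, j ∈ {1,…,N_l} and r, s ∈ {1,…,R}, the second-order partial derivative of the PCP loglikelihood satisfies −∂²ℓ(X|θ)/∂A_k(i,r)∂A_l(j,s) = A_k(i,s) A_l(j,r) Σ_{i' : i'_k = i, i'_l = j} (x_{i'}/m_{i'}²) ∏_{q≠k,l} A_q(i'_q,r) A_q(i'_q,s) + [r = s] · ( ∏_{q≠k,l} λ_q(r) − Σ_{i' : i'_k = i, i'_l = j} (x_{i'}/m_{i'}) ∏_{q≠k,l} A_q(i'_q,r) ), where λ_q(r) = Σ_{j=1}^{N_q} A_q(j,r), [r = s] is 1 if r = s and 0 otherwise, the sums range over all multi-indices i' with k-th coordinate i and l-th coordinate j, and products over the empty set (the case P = 2) equal 1. -/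

import Mathlib

open Finset

noncomputable section

variable {P R : ℕ} {N : Fin P → ℕ}

/-- Entry `m_i = Σ_r ∏_p A_p(i_p, r)` of the CP parameter tensor. -/
def mTen (A : (p : Fin P) → Fin (N p) → Fin R → ℝ) (i : (p : Fin P) → Fin (N p)) : ℝ :=
  ∑ r, ∏ p, A p (i p) r

/-- PCP loglikelihood `ℓ(X|θ) = Σ_i [ x_i log m_i − m_i − log(x_i!) ]`. -/
def llik (A : (p : Fin P) → Fin (N p) → Fin R → ℝ)
    (X : ((p : Fin P) → Fin (N p)) → ℕ) : ℝ :=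
  ∑ i : (p : Fin P) → Fin (N p),
    ((X i : ℝ) * Real.log (mTen A i) - mTen A i - Real.log (Nat.factorial (X i) : ℝ))

/-- The collection of factor matrices with the single entry `A_k(i,r)` replaced by `t`. -/
def updEntry (A : (q : Fin P) → Fin (N q) → Fin R → ℝ) (k : Fin P) (i : Fin (N k)) (r : Fin R)
    (t : ℝ) : (q : Fin P) → Fin (N q) → Fin R → ℝ :=
  Function.update A k (Function.update (A k) i (Function.update (A k i) r t))

/-- Partial derivative of a function of the factor matrices in the single entry
`A_k(i,r)`, i.e. the derivative of the real function obtained by varying that entry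
with all other entries fixed, evaluated at the current entry value. -/
def pd (f : ((q : Fin P) → Fin (N q) → Fin R → ℝ) → ℝ) (k : Fin P) (i : Fin (N k)) (r : Fin R)
    (A : (q : Fin P) → Fin (N q) → Fin R → ℝ) : ℝ :=
  deriv (fun t => f (updEntry A k i r t)) (A k i r)

/-- Column sum `λ_q(r) = Σ_j A_q(j,r)`. -/
def lamCol (A : (p : Fin P) → Fin (N p) → Fin R → ℝ) (q : Fin P) (r : Fin R) : ℝ :=
  ∑ j, A q j r

lemma updEntry_ne (A : (q : Fin P) → Fin (N q) → Fin R → ℝ) {k p : Fin P} (i : Fin (N k))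
    (r : Fin R) (t : ℝ) (h : p ≠ k) : updEntry A k i r t p = A p :=
  Function.update_of_ne h _ _

lemma updEntry_k (A : (q : Fin P) → Fin (N q) → Fin R → ℝ) (k : Fin P) (i i' : Fin (N k))
    (r r' : Fin R) (t : ℝ) :
    updEntry A k i r t k i' r' = if i' = i ∧ r' = r then t else A k i' r' := by
  unfold updEntry
  rw [Function.update_self]
  by_cases hi : i' = i
  · subst hi
    rw [Function.update_self]
    by_cases hr : r' = r
    · subst hr; simp
    · simp [hr, Function.update_of_ne hr]
  · simp [hi, Function.update_of_ne hi]

lemma updEntry_self (A : (q : Fin P) → Fin (N q) → Fin R → ℝ) (k : Fin P) (i : Fin (N k))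
    (r : Fin R) : updEntry A k i r (A k i r) = A := by
  unfold updEntry
  simp [Function.update_eq_self]

lemma mTen_pos {A : (p : Fin P) → Fin (N p) → Fin R → ℝ} (hR : 1 ≤ R)
    (hA : ∀ p j r, 0 < A p j r) (i : (p : Fin P) → Fin (N p)) : 0 < mTen A i := by
  have : Nonempty (Fin R) := Fin.pos_iff_nonempty.mp hR
  exact Finset.sum_pos (fun r _ => Finset.prod_pos fun p _ => hA p (i p) r) Finset.univ_nonempty

lemma mTen_upd (A : (p : Fin P) → Fin (N p) → Fin R → ℝ) (k : Fin P) (i : Fin (N k))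
    (r : Fin R) (t : ℝ) (i' : (p : Fin P) → Fin (N p)) :
    mTen (updEntry A k i r t) i' =
      mTen A i' + (t - A k i r) *
        (if i' k = i then ∏ q ∈ univ.erase k, A q (i' q) r else 0) := by
  have hprod : ∀ r' : Fin R, ∏ p, updEntry A k i r t p (i' p) r' =
      (∏ p, A p (i' p) r') +
        (if r' = r ∧ i' k = i then (t - A k i r) * ∏ q ∈ univ.erase k, A q (i' q) r else 0) := by
    intro r'
    by_cases hc : r' = r ∧ i' k = i
    · obtain ⟨hr, hik⟩ := hc
      subst hr
      rw [if_pos ⟨rfl, hik⟩]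
      rw [← Finset.mul_prod_erase univ _ (Finset.mem_univ k),
        ← Finset.mul_prod_erase univ (fun p => A p (i' p) r') (Finset.mem_univ k)]
      have h1 : updEntry A k i r' t k (i' k) r' = t := by
        rw [updEntry_k]; simp [hik]
      have h2 : ∀ q ∈ univ.erase k, updEntry A k i r' t q (i' q) r' = A q (i' q) r' := by
        intro q hq
        rw [updEntry_ne A _ _ _ (Finset.ne_of_mem_erase hq)]
      rw [Finset.prod_congr rfl h2, h1, hik]
      ring
    · rw [if_neg hc]
      rw [add_zero]
      apply Finset.prod_congr rfl
      intro p _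
      by_cases hp : p = k
      · subst hp
        rw [updEntry_k]
        rw [if_neg]
        rintro ⟨h1, h2⟩
        exact hc ⟨h2, h1⟩
      · rw [updEntry_ne A _ _ _ hp]
  unfold mTen
  rw [Finset.sum_congr rfl (fun r' _ => hprod r'), Finset.sum_add_distrib]
  congr 1
  by_cases h : i' k = i <;> simp [h]

lemma prodErase_upd (A : (p : Fin P) → Fin (N p) → Fin R → ℝ) {k l : Fin P} (hkl : k ≠ l)
    (i : Fin (N k)) (r s : Fin R) (t : ℝ) (i' : (p : Fin P) → Fin (N p)) :
    ∏ q ∈ univ.erase l, updEntry A k i r t q (i' q) s =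
      (∏ q ∈ univ.erase l, A q (i' q) s) + (t - A k i r) *
        (if i' k = i ∧ s = r then ∏ q ∈ (univ.erase l).erase k, A q (i' q) s else 0) := by
  have hkl' : k ∈ (univ : Finset (Fin P)).erase l :=
    Finset.mem_erase.mpr ⟨hkl, Finset.mem_univ k⟩
  rw [← Finset.mul_prod_erase (univ.erase l) (fun q => updEntry A k i r t q (i' q) s) hkl',
      ← Finset.mul_prod_erase (univ.erase l) (fun q => A q (i' q) s) hkl']
  have h2 : ∀ q ∈ (univ.erase l).erase k, updEntry A k i r t q (i' q) s = A q (i' q) s :=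
    fun q hq => by rw [updEntry_ne A _ _ _ (Finset.ne_of_mem_erase hq)]
  rw [Finset.prod_congr rfl h2, updEntry_k]
  by_cases hc : i' k = i ∧ s = r
  · obtain ⟨h1, h2'⟩ := hc
    rw [if_pos ⟨h1, h2'⟩, if_pos ⟨h1, h2'⟩, h1, h2']
    ring
  · rw [if_neg hc, if_neg hc]
    ring

lemma pd_llik (X : ((p : Fin P) → Fin (N p)) → ℕ) (l : Fin P) (j : Fin (N l)) (s : Fin R)
    (A' : (p : Fin P) → Fin (N p) → Fin R → ℝ) (hA' : ∀ i', 0 < mTen A' i') :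
    pd (fun A'' => llik A'' X) l j s A' =
      ∑ i' : (p : Fin P) → Fin (N p),
        (if i' l = j then ((X i' : ℝ) / mTen A' i' - 1) * ∏ q ∈ univ.erase l, A' q (i' q) s
         else 0) := by
  set t₀ := A' l j s with ht₀
  set d : ((p : Fin P) → Fin (N p)) → ℝ :=
    fun i' => if i' l = j then ∏ q ∈ univ.erase l, A' q (i' q) s else 0 with hd
  have hll : (fun t => llik (updEntry A' l j s t) X) =
      fun t => ∑ i' : (p : Fin P) → Fin (N p),
        ((X i' : ℝ) * Real.log (mTen A' i' + (t - t₀) * d i')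
          - (mTen A' i' + (t - t₀) * d i') - Real.log (Nat.factorial (X i') : ℝ)) := by
    funext t
    unfold llik
    exact Finset.sum_congr rfl fun i' _ => by rw [mTen_upd]
  have key : HasDerivAt (fun t => llik (updEntry A' l j s t) X)
      (∑ i' : (p : Fin P) → Fin (N p), ((X i' : ℝ) / mTen A' i' - 1) * d i') t₀ := by
    rw [hll]
    apply HasDerivAt.fun_sum
    intro i' _
    have hm := hA' i'
    have hg : HasDerivAt (fun t => mTen A' i' + (t - t₀) * d i') (d i') t₀ := by
      simpa using (((hasDerivAt_id t₀).sub_const t₀).mul_const (d i')).const_add (mTen A' i')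
    have hgval : mTen A' i' + (t₀ - t₀) * d i' = mTen A' i' := by ring
    have hlog : HasDerivAt (fun t => Real.log (mTen A' i' + (t - t₀) * d i'))
        (d i' / mTen A' i') t₀ := by
      have := hg.log (by rw [hgval]; exact ne_of_gt hm)
      rwa [hgval] at this
    have h3 := ((hlog.const_mul (X i' : ℝ)).fun_sub hg).sub_const (Real.log (Nat.factorial (X i') : ℝ))
    convert h3 using 1
    field_simp
  rw [pd, ← ht₀, key.deriv]
  apply Finset.sum_congr rfl
  intro i' _
  by_cases h : i' l = j <;> simp [hd, h]

lemma pi_id (f : (q : Fin P) → Fin (N q) → ℝ) {k l : Fin P} (hkl : k ≠ l)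
    (i : Fin (N k)) (j : Fin (N l)) :
    ∑ i' ∈ univ.filter (fun i' : (q : Fin P) → Fin (N q) => i' k = i ∧ i' l = j),
      ∏ q ∈ (univ.erase k).erase l, f q (i' q) =
    ∏ q ∈ (univ.erase k).erase l, ∑ a, f q a := by
  classical
  set g : (q : Fin P) → Fin (N q) → ℝ :=
    Function.update (Function.update f k (fun a => if a = i then 1 else 0)) l
      (fun a => if a = j then 1 else 0) with hg
  have hgk : g k = fun a => if a = i then (1 : ℝ) else 0 := by
    rw [hg, Function.update_of_ne hkl, Function.update_self]
  have hgl : g l = fun a => if a = j then (1 : ℝ) else 0 := Function.update_self _ _ _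
  have hgq : ∀ q ∈ (univ.erase k).erase l, g q = f q := by
    intro q hq
    have h1 : q ≠ l := Finset.ne_of_mem_erase hq
    have h2 : q ≠ k := Finset.ne_of_mem_erase (Finset.mem_of_mem_erase hq)
    rw [hg, Function.update_of_ne h1, Function.update_of_ne h2]
  have hlk : l ∈ (univ : Finset (Fin P)).erase k :=
    Finset.mem_erase.mpr ⟨Ne.symm hkl, Finset.mem_univ l⟩
  have main := Finset.prod_univ_sum (fun _ : Fin P => (univ : Finset _)) (fun q a => g q a)
  rw [Fintype.piFinset_univ] at main
  have hL : ∀ i' : (q : Fin P) → Fin (N q), (∏ q, g q (i' q)) =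
      if i' k = i ∧ i' l = j then ∏ q ∈ (univ.erase k).erase l, f q (i' q) else 0 := by
    intro i'
    rw [← Finset.mul_prod_erase univ (fun q => g q (i' q)) (Finset.mem_univ k),
      ← Finset.mul_prod_erase (univ.erase k) (fun q => g q (i' q)) hlk,
      Finset.prod_congr rfl (fun q hq => by rw [hgq q hq]), hgk, hgl]
    by_cases h1 : i' k = i
    · by_cases h2 : i' l = j
      · simp [h1, h2]
      · simp [h1, h2]
    · simp [h1]
  have hR : (∏ q, ∑ a, g q a) = ∏ q ∈ (univ.erase k).erase l, ∑ a, f q a := by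
    rw [← Finset.mul_prod_erase univ (fun q => ∑ a, g q a) (Finset.mem_univ k),
      ← Finset.mul_prod_erase (univ.erase k) (fun q => ∑ a, g q a) hlk,
      Finset.prod_congr rfl (fun q hq => by rw [hgq q hq]), hgk, hgl]
    simp
  calc ∑ i' ∈ univ.filter (fun i' : (q : Fin P) → Fin (N q) => i' k = i ∧ i' l = j),
        ∏ q ∈ (univ.erase k).erase l, f q (i' q)
      = ∑ i' : (q : Fin P) → Fin (N q),
          if i' k = i ∧ i' l = j then ∏ q ∈ (univ.erase k).erase l, f q (i' q) else 0 :=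
        Finset.sum_filter _ _
    _ = ∑ i' : (q : Fin P) → Fin (N q), ∏ q, g q (i' q) :=
        (Finset.sum_congr rfl fun i' _ => (hL i').symm)
    _ = ∏ q, ∑ a, g q a := main.symm
    _ = ∏ q ∈ (univ.erase k).erase l, ∑ a, f q a := hR

lemma pd_pd (hR : 1 ≤ R) (A : (p : Fin P) → Fin (N p) → Fin R → ℝ)
    (hA : ∀ p j r, 0 < A p j r) (X : ((p : Fin P) → Fin (N p)) → ℕ)
    {k l : Fin P} (hkl : k ≠ l) (i : Fin (N k)) (j : Fin (N l)) (r s : Fin R) :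
    pd (fun A' => pd (fun A'' => llik A'' X) l j s A') k i r A =
      ∑ i' : (p : Fin P) → Fin (N p),
        (if i' l = j then
          (-((X i' : ℝ) * (if i' k = i then ∏ q ∈ univ.erase k, A q (i' q) r else 0))
              / (mTen A i') ^ 2) * ∏ q ∈ univ.erase l, A q (i' q) s
          + ((X i' : ℝ) / mTen A i' - 1) *
            (if i' k = i ∧ s = r then ∏ q ∈ (univ.erase l).erase k, A q (i' q) s else 0)
        else 0) := by
  classical
  set t₀ := A k i r with ht₀
  set dk : ((p : Fin P) → Fin (N p)) → ℝ :=
    fun i' => if i' k = i then ∏ q ∈ univ.erase k, A q (i' q) r else 0 with hdk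
  set ee : ((p : Fin P) → Fin (N p)) → ℝ :=
    fun i' => ∏ q ∈ univ.erase l, A q (i' q) s with hee
  set hh : ((p : Fin P) → Fin (N p)) → ℝ :=
    fun i' => if i' k = i ∧ s = r then ∏ q ∈ (univ.erase l).erase k, A q (i' q) s else 0
    with hhh
  have hpos : ∀ᶠ t in nhds t₀, ∀ i', 0 < mTen (updEntry A k i r t) i' := by
    rw [Filter.eventually_all]
    intro i'
    have hc : ContinuousAt (fun t => mTen (updEntry A k i r t) i') t₀ := by
      have heq : (fun t => mTen (updEntry A k i r t) i') =
          fun t => mTen A i' + (t - A k i r) * dk i' :=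
        funext fun t => mTen_upd A k i r t i'
      rw [heq]
      fun_prop
    have h0 : 0 < mTen (updEntry A k i r t₀) i' := by
      rw [ht₀, updEntry_self]
      exact mTen_pos hR hA i'
    exact hc.eventually (eventually_gt_nhds h0)
  have hFG : (fun t => pd (fun A'' => llik A'' X) l j s (updEntry A k i r t)) =ᶠ[nhds t₀]
      (fun t => ∑ i' : (p : Fin P) → Fin (N p),
        (if i' l = j then
          ((X i' : ℝ) / (mTen A i' + (t - t₀) * dk i') - 1) * (ee i' + (t - t₀) * hh i')
        else 0)) := by
    filter_upwards [hpos] with t ht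
    rw [pd_llik X l j s _ ht]
    apply Finset.sum_congr rfl
    intro i' _
    by_cases hj : i' l = j
    · rw [if_pos hj, if_pos hj, mTen_upd, prodErase_upd A hkl, ht₀]
    · rw [if_neg hj, if_neg hj]
  have hmne : ∀ i' : (p : Fin P) → Fin (N p), mTen A i' ≠ 0 :=
    fun i' => ne_of_gt (mTen_pos hR hA i')
  have key : HasDerivAt (fun t => ∑ i' : (p : Fin P) → Fin (N p),
      (if i' l = j then
        ((X i' : ℝ) / (mTen A i' + (t - t₀) * dk i') - 1) * (ee i' + (t - t₀) * hh i')
      else 0))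
      (∑ i' : (p : Fin P) → Fin (N p),
        (if i' l = j then
          (-((X i' : ℝ) * dk i') / (mTen A i') ^ 2) * ee i'
            + ((X i' : ℝ) / mTen A i' - 1) * hh i'
        else 0)) t₀ := by
    apply HasDerivAt.fun_sum
    intro i' _
    by_cases hj : i' l = j
    · simp only [if_pos hj]
      have hg : HasDerivAt (fun t => mTen A i' + (t - t₀) * dk i') (dk i') t₀ := by
        simpa using (((hasDerivAt_id t₀).sub_const t₀).mul_const (dk i')).const_add (mTen A i')
      have hgval : mTen A i' + (t₀ - t₀) * dk i' = mTen A i' := by ring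
      have hu : HasDerivAt (fun t => (X i' : ℝ) / (mTen A i' + (t - t₀) * dk i') - 1)
          ((0 * (mTen A i' + (t₀ - t₀) * dk i') - (X i' : ℝ) * dk i')
            / (mTen A i' + (t₀ - t₀) * dk i') ^ 2) t₀ :=
        ((hasDerivAt_const t₀ (X i' : ℝ)).div hg (by rw [hgval]; exact hmne i')).sub_const 1
      have hv : HasDerivAt (fun t => ee i' + (t - t₀) * hh i') (hh i') t₀ := by
        simpa using (((hasDerivAt_id t₀).sub_const t₀).mul_const (hh i')).const_add (ee i')
      have := hu.fun_mul hv
      refine this.congr_deriv ?_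
      rw [hgval]
      simp only [sub_self, zero_mul, mul_zero, add_zero, zero_sub]
    · simp only [if_neg hj]
      exact hasDerivAt_const t₀ 0
  rw [pd, ← ht₀, hFG.deriv_eq, key.deriv]

theorem stmt_9 (P R : ℕ) (hP : 2 ≤ P) (hR : 1 ≤ R) (N : Fin P → ℕ) (hN : ∀ p, 1 ≤ N p)
    (A : (p : Fin P) → Fin (N p) → Fin R → ℝ) (hA : ∀ p j r, 0 < A p j r)
    (X : ((p : Fin P) → Fin (N p)) → ℕ)
    (k l : Fin P) (hkl : k ≠ l) (i : Fin (N k)) (j : Fin (N l)) (r s : Fin R) :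
    pd (fun A' => pd (fun A'' => llik A'' X) l j s A') k i r A =
      -(A k i s * A l j r *
          (∑ i' ∈ Finset.univ.filter
              (fun i' : (q : Fin P) → Fin (N q) => i' k = i ∧ i' l = j),
            (X i' : ℝ) / (mTen A i') ^ 2 *
              ∏ q ∈ (Finset.univ.erase k).erase l, A q (i' q) r * A q (i' q) s)
        + (if r = s then
            (∏ q ∈ (Finset.univ.erase k).erase l, lamCol A q r)
              - ∑ i' ∈ Finset.univ.filter
                  (fun i' : (q : Fin P) → Fin (N q) => i' k = i ∧ i' l = j),
                  (X i' : ℝ) / mTen A i' *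
                    ∏ q ∈ (Finset.univ.erase k).erase l, A q (i' q) r
          else 0)) := by
  classical
  rw [pd_pd hR A hA X hkl i j r s]
  have hlk : l ∈ (univ : Finset (Fin P)).erase k :=
    Finset.mem_erase.mpr ⟨Ne.symm hkl, Finset.mem_univ l⟩
  have hkl' : k ∈ (univ : Finset (Fin P)).erase l :=
    Finset.mem_erase.mpr ⟨hkl, Finset.mem_univ k⟩
  by_cases hrs : r = s
  · -- case r = s
    subst hrs
    rw [if_pos rfl]
    have e3 : (∑ i' : (p : Fin P) → Fin (N p),
        -(if i' k = i ∧ i' l = j then ∏ q ∈ (univ.erase k).erase l, A q (i' q) r else 0)) =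
        -(∏ q ∈ (univ.erase k).erase l, lamCol A q r) := by
      rw [Finset.sum_neg_distrib]
      rw [← Finset.sum_filter]
      rw [pi_id (fun q a => A q a r) hkl i j]
      rfl
    have e2 : (∑ i' : (p : Fin P) → Fin (N p),
        (if i' k = i ∧ i' l = j then
          (X i' : ℝ) / mTen A i' * ∏ q ∈ (univ.erase k).erase l, A q (i' q) r else 0)) =
        ∑ i' ∈ univ.filter (fun i' : (q : Fin P) → Fin (N q) => i' k = i ∧ i' l = j),
          (X i' : ℝ) / mTen A i' * ∏ q ∈ (univ.erase k).erase l, A q (i' q) r :=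
      (Finset.sum_filter _ _).symm
    have e1 : (∑ i' : (p : Fin P) → Fin (N p),
        (if i' k = i ∧ i' l = j then
          -(A k i r * A l j r * ((X i' : ℝ) / (mTen A i') ^ 2 *
            ∏ q ∈ (univ.erase k).erase l, A q (i' q) r * A q (i' q) r)) else 0)) =
        -(A k i r * A l j r *
          ∑ i' ∈ univ.filter (fun i' : (q : Fin P) → Fin (N q) => i' k = i ∧ i' l = j),
            (X i' : ℝ) / (mTen A i') ^ 2 *
              ∏ q ∈ (univ.erase k).erase l, A q (i' q) r * A q (i' q) r) := by
      rw [Finset.mul_sum, ← Finset.sum_neg_distrib, Finset.sum_filter]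
    rw [show -(A k i r * A l j r *
          (∑ i' ∈ univ.filter (fun i' : (q : Fin P) → Fin (N q) => i' k = i ∧ i' l = j),
            (X i' : ℝ) / (mTen A i') ^ 2 *
              ∏ q ∈ (univ.erase k).erase l, A q (i' q) r * A q (i' q) r)
        + ((∏ q ∈ (univ.erase k).erase l, lamCol A q r)
            - ∑ i' ∈ univ.filter (fun i' : (q : Fin P) → Fin (N q) => i' k = i ∧ i' l = j),
              (X i' : ℝ) / mTen A i' * ∏ q ∈ (univ.erase k).erase l, A q (i' q) r)) =
        -(A k i r * A l j r *
          (∑ i' ∈ univ.filter (fun i' : (q : Fin P) → Fin (N q) => i' k = i ∧ i' l = j),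
            (X i' : ℝ) / (mTen A i') ^ 2 *
              ∏ q ∈ (univ.erase k).erase l, A q (i' q) r * A q (i' q) r))
        + ((∑ i' ∈ univ.filter (fun i' : (q : Fin P) → Fin (N q) => i' k = i ∧ i' l = j),
              (X i' : ℝ) / mTen A i' * ∏ q ∈ (univ.erase k).erase l, A q (i' q) r)
            + -(∏ q ∈ (univ.erase k).erase l, lamCol A q r)) by ring]
    rw [← e1, ← e2, ← e3, ← Finset.sum_add_distrib, ← Finset.sum_add_distrib]
    apply Finset.sum_congr rfl
    intro i' _
    by_cases hj : i' l = j
    · by_cases hik : i' k = i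
      · rw [if_pos hj, if_pos hik, if_pos ⟨hik, rfl⟩, if_pos ⟨hik, hj⟩, if_pos ⟨hik, hj⟩,
          if_pos ⟨hik, hj⟩]
        have hdk : (∏ q ∈ univ.erase k, A q (i' q) r) =
            A l j r * ∏ q ∈ (univ.erase k).erase l, A q (i' q) r := by
          rw [← Finset.mul_prod_erase (univ.erase k) (fun q => A q (i' q) r) hlk, hj]
        have he : (∏ q ∈ univ.erase l, A q (i' q) r) =
            A k i r * ∏ q ∈ (univ.erase k).erase l, A q (i' q) r := by
          rw [← Finset.mul_prod_erase (univ.erase l) (fun q => A q (i' q) r) hkl', hik,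
            Finset.erase_right_comm]
        have hh2 : ((univ : Finset (Fin P)).erase l).erase k = (univ.erase k).erase l :=
          Finset.erase_right_comm
        rw [hdk, he, hh2, Finset.prod_mul_distrib]
        ring
      · rw [if_pos hj, if_neg hik,
          if_neg (fun h => hik h.1), if_neg (fun h => hik h.1),
          if_neg (fun h => hik h.1), if_neg (fun h => hik h.1)]
        ring
    · rw [if_neg hj, if_neg (fun h => hj h.2), if_neg (fun h => hj h.2),
        if_neg (fun h => hj h.2)]
      ring
  · -- case r ≠ s
    rw [if_neg hrs, add_zero, Finset.mul_sum, ← Finset.sum_neg_distrib, Finset.sum_filter]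
    apply Finset.sum_congr rfl
    intro i' _
    by_cases hj : i' l = j
    · by_cases hik : i' k = i
      · rw [if_pos hj, if_pos hik, if_neg (fun h => hrs h.2.symm), if_pos ⟨hik, hj⟩]
        have hdk : (∏ q ∈ univ.erase k, A q (i' q) r) =
            A l j r * ∏ q ∈ (univ.erase k).erase l, A q (i' q) r := by
          rw [← Finset.mul_prod_erase (univ.erase k) (fun q => A q (i' q) r) hlk, hj]
        have he : (∏ q ∈ univ.erase l, A q (i' q) s) =
            A k i s * ∏ q ∈ (univ.erase k).erase l, A q (i' q) s := by
          rw [← Finset.mul_prod_erase (univ.erase l) (fun q => A q (i' q) s) hkl', hik,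
            Finset.erase_right_comm]
        rw [hdk, he, Finset.prod_mul_distrib]
        ring
      · rw [if_pos hj, if_neg hik, if_neg (fun h => hik h.1), if_neg (fun h => hik h.1)]
        ring
    · rw [if_neg hj, if_neg (fun h => hj h.2)]
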